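/- Let G = (Q, Σ, δ, q0) be a partial deterministic automaton, q_s ∈ Q, r ∈ ℕ, and D_1, …, D_r protection policies on G whose protected transition sets Prot(D_j) = {(q, σ) | σ ∈ D_j(q) and δ(q, σ) is defined} are pairwise disjoint. Suppose that for each j ∈ {1, …, r}, every word w with δ*(q0, w) = some q_s satisfies pc(D_j, q0, w) ≥ 1. Then, for the union policy D defined by D(q) = ⋃_{j=1}^r D_j(q), every word w with δ*(q0, w) = some q_s satisfies pc(D, q0, w) ≥ r. -/

import Mathlib

def run {Q : Type*} {E : Type*} (δ : Q → E → Option Q) : Q → List E → Option Q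
  | q, [] => some q
  | q, σ :: w => (δ q σ).bind fun q' => run δ q' w

open Classical in
noncomputable def pcount {Q : Type*} {E : Type*} (δ : Q → E → Option Q)
    (P : Q → Set E) : Q → List E → ℕ
  | _, [] => 0
  | q, σ :: w =>
      (if σ ∈ P q then 1 else 0) +
        match δ q σ with
        | some q' => pcount δ P q' w
        | none => 0

open Classical in
def secureReach {Q : Type*} {E : Type*} (δ : Q → E → Option Q) (q0 : Q)
    (A : Set E) (r : ℕ) (qs : Q) : Prop :=
  ∀ w : List E, run δ q0 w = some qs → w.countP (fun σ => σ ∈ A) ≥ r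

def prot {Q E : Type*} (δ : Q → E → Option Q) (P : Q → Set E) : Set (Q × E) :=
  {p | p.2 ∈ P p.1 ∧ (δ p.1 p.2).isSome}

open Classical in
lemma sum_le_union_pcount {Q E : Type*} (δ : Q → E → Option Q) {r : ℕ}
    (D : Fin r → Q → Set E)
    (hdisj : Pairwise fun j j' => Disjoint (prot δ (D j)) (prot δ (D j'))) :
    ∀ (w : List E) (q q' : Q), run δ q w = some q' →
      ∑ j, pcount δ (D j) q w ≤ pcount δ (fun q => ⋃ j, D j q) q w := by
  intro w
  induction w with
  | nil => intro q q' _; simp [pcount]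
  | cons σ w ih =>
    intro q q' hrun
    simp only [run, Option.bind_eq_some_iff] at hrun
    obtain ⟨q1, hδ, hrun⟩ := hrun
    have hpc : ∀ (P : Q → Set E), pcount δ P q (σ :: w) =
        (if σ ∈ P q then 1 else 0) + pcount δ P q1 w := by
      intro P; simp [pcount, hδ]
    rw [hpc]
    simp only [hpc]
    rw [Finset.sum_add_distrib]
    have hind : (∑ j, if σ ∈ D j q then 1 else 0) ≤
        (if σ ∈ (⋃ j, D j q) then 1 else 0) := by
      by_cases hex : ∃ j0, σ ∈ D j0 q
      · obtain ⟨j0, hj0⟩ := hex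
        have : (∑ j, if σ ∈ D j q then 1 else 0) = 1 := by
          rw [Finset.sum_eq_single_of_mem j0 (Finset.mem_univ _)]
          · simp [hj0]
          · intro j _ hne
            by_cases hj : σ ∈ D j q
            · exact absurd (⟨hj0, by simp [hδ]⟩ : (q, σ) ∈ prot δ (D j0))
                (Set.disjoint_left.mp (hdisj hne) ⟨hj, by simp [hδ]⟩)
            · simp [hj]
        rw [this, if_pos (Set.mem_iUnion.mpr ⟨j0, hj0⟩)]
      · push_neg at hex
        simp [hex]
    exact Nat.add_le_add hind (ih q1 q' hrun)

theorem union_of_disjoint_policies {Q E : Type*} (δ : Q → E → Option Q) (q0 qs : Q)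
    (r : ℕ) (D : Fin r → Q → Set E)
    (hdisj : Pairwise fun j j' => Disjoint (prot δ (D j)) (prot δ (D j')))
    (h : ∀ j, ∀ w, run δ q0 w = some qs → pcount δ (D j) q0 w ≥ 1) :
    ∀ w, run δ q0 w = some qs → pcount δ (fun q => ⋃ j, D j q) q0 w ≥ r := by
  intro w hw
  calc r = ∑ _j : Fin r, 1 := by simp
    _ ≤ ∑ j, pcount δ (D j) q0 w := Finset.sum_le_sum fun j _ => h j w hw
    _ ≤ _ := sum_le_union_pcount δ D hdisj w q0 qs hw
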